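/- There is a bijection between the set O_{2n,2} of oscillating domino tableaux of length 2n with all shapes having at most two columns and the set P_{2n} of Dyck path packings of length 2n. -/

import Mathlib

/-- Two cells of `ℕ × ℕ` are adjacent. -/
def CellAdj (p q : ℕ × ℕ) : Prop :=
  (p.1 = q.1 ∧ (p.2 + 1 = q.2 ∨ q.2 + 1 = p.2)) ∨
  (p.2 = q.2 ∧ (p.1 + 1 = q.1 ∨ q.1 + 1 = p.1))

/-- `lam` is obtained from `μ` by adding a domino (two adjacent cells). -/
def IsDominoAdd (μ lam : YoungDiagram) : Prop :=
  μ ≤ lam ∧ (lam.cells \ μ.cells).card = 2 ∧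
    ∀ p ∈ lam.cells \ μ.cells, ∀ q ∈ lam.cells \ μ.cells, p ≠ q → CellAdj p q

/-- An oscillating domino tableau of length `2n` whose shapes all have at most two
columns (every cell lies in column 0 or 1). -/
def IsOscDominoTwoCol (n : ℕ) (T : Fin (2*n + 1) → YoungDiagram) : Prop :=
  T 0 = ⊥ ∧ T (Fin.last (2*n)) = ⊥ ∧
  (∀ i : Fin (2*n), IsDominoAdd (T i.castSucc) (T i.succ) ∨
    IsDominoAdd (T i.succ) (T i.castSucc)) ∧
  ∀ i, ∀ p ∈ (T i).cells, p.2 < 2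

/-- A Dyck path of length `2n`, encoded by its heights. -/
def IsDyckPath (n : ℕ) (h : Fin (2*n + 1) → ℕ) : Prop :=
  h 0 = 0 ∧ h (Fin.last (2*n)) = 0 ∧
  ∀ i : Fin (2*n), h i.succ = h i.castSucc + 1 ∨ h i.castSucc = h i.succ + 1

/-- A dispersed Dyck path of length `2n`: up/down steps, and horizontal steps
only at height 0. -/
def IsDispersedDyck (n : ℕ) (h : Fin (2*n + 1) → ℕ) : Prop :=
  h 0 = 0 ∧ h (Fin.last (2*n)) = 0 ∧
  ∀ i : Fin (2*n), h i.succ = h i.castSucc + 1 ∨ h i.castSucc = h i.succ + 1 ∨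
    (h i.succ = h i.castSucc ∧ h i.castSucc = 0)

/-- A Dyck path packing of length `2n`: a Dyck path `D` and a dispersed Dyck path `E`
with `E` weakly below `D`. -/
def IsDyckPacking (n : ℕ) (D E : Fin (2*n + 1) → ℕ) : Prop :=
  IsDyckPath n D ∧ IsDispersedDyck n E ∧ ∀ i, E i ≤ D i



def twoColCells (c0 c1 : ℕ) : Finset (ℕ × ℕ) :=
  ((Finset.range c0).image (fun i => (i, 0))) ∪ ((Finset.range (min c1 c0)).image (fun i => (i, 1)))

lemma mem_twoColCells {c0 c1 : ℕ} {p : ℕ × ℕ} :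
    p ∈ twoColCells c0 c1 ↔ (p.2 = 0 ∧ p.1 < c0) ∨ (p.2 = 1 ∧ p.1 < min c1 c0) := by
  obtain ⟨i, j⟩ := p
  simp only [twoColCells, Finset.mem_union, Finset.mem_image, Finset.mem_range, Prod.mk.injEq]
  constructor
  · rintro (⟨k, hk, rfl, rfl⟩ | ⟨k, hk, rfl, rfl⟩) <;> simp_all
  · rintro (⟨rfl, h⟩ | ⟨rfl, h⟩)
    · exact Or.inl ⟨i, h, rfl, rfl⟩
    · exact Or.inr ⟨i, h, rfl, rfl⟩

def twoCol (c0 c1 : ℕ) : YoungDiagram where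
  cells := twoColCells c0 c1
  isLowerSet := by
    rintro ⟨i, j⟩ ⟨i', j'⟩ ⟨hi, hj⟩ h
    rw [Finset.mem_coe, mem_twoColCells] at h ⊢
    simp only at hi hj ⊢
    omega

lemma mem_twoCol {c0 c1 : ℕ} {p : ℕ × ℕ} :
    p ∈ twoCol c0 c1 ↔ (p.2 = 0 ∧ p.1 < c0) ∨ (p.2 = 1 ∧ p.1 < min c1 c0) :=
  mem_twoColCells

lemma colLen_twoCol_zero (c0 c1 : ℕ) : (twoCol c0 c1).colLen 0 = c0 := by
  have h : ∀ i, (i, 0) ∈ twoCol c0 c1 ↔ i < c0 := by intro i; rw [mem_twoCol]; simp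
  rcases Nat.eq_zero_or_pos c0 with h0 | h0
  · subst h0
    by_contra hne
    have := (YoungDiagram.mem_iff_lt_colLen (μ := twoCol 0 c1) (i := 0) (j := 0)).2 (by omega)
    rw [mem_twoCol] at this
    simp at this
  · have h1 := (YoungDiagram.mem_iff_lt_colLen (μ := twoCol c0 c1) (j := 0)).1 ((h (c0-1)).2 (by omega))
    by_contra hne
    have h2 := (YoungDiagram.mem_iff_lt_colLen (μ := twoCol c0 c1) (i := c0) (j := 0)).2 (by omega)
    rw [h c0] at h2; omega

lemma colLen_twoCol_one (c0 c1 : ℕ) : (twoCol c0 c1).colLen 1 = min c1 c0 := by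
  have h : ∀ i, (i, 1) ∈ twoCol c0 c1 ↔ i < min c1 c0 := by intro i; rw [mem_twoCol]; simp
  rcases Nat.eq_zero_or_pos (min c1 c0) with h0 | h0
  · by_contra hne
    have := (YoungDiagram.mem_iff_lt_colLen (μ := twoCol c0 c1) (i := 0) (j := 1)).2 (by omega)
    rw [h 0] at this; omega
  · have h1 := (YoungDiagram.mem_iff_lt_colLen (μ := twoCol c0 c1) (j := 1)).1 ((h (min c1 c0 - 1)).2 (by omega))
    by_contra hne
    have h2 := (YoungDiagram.mem_iff_lt_colLen (μ := twoCol c0 c1) (i := min c1 c0) (j := 1)).2 (by omega)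
    rw [h _] at h2; omega

/-- A diagram with all cells in columns `< 2` is a `twoCol`. -/
lemma eq_twoCol {μ : YoungDiagram} (h2 : ∀ p ∈ μ.cells, p.2 < 2) :
    μ = twoCol (μ.colLen 0) (μ.colLen 1) := by
  have hle : μ.colLen 1 ≤ μ.colLen 0 := μ.colLen_anti 0 1 (by omega)
  ext p
  obtain ⟨i, j⟩ := p
  rw [YoungDiagram.mem_cells, YoungDiagram.mem_cells, mem_twoCol,
    YoungDiagram.mem_iff_lt_colLen]
  constructor
  · intro hm
    have hj : j < 2 := h2 (i, j) (by rwa [YoungDiagram.mem_cells, YoungDiagram.mem_iff_lt_colLen])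
    interval_cases j
    · exact Or.inl ⟨rfl, hm⟩
    · exact Or.inr ⟨rfl, by omega⟩
  · rintro (⟨rfl, h⟩ | ⟨rfl, h⟩) <;> omega

lemma twoCol_cols {c0 c1 : ℕ} : ∀ p ∈ (twoCol c0 c1).cells, p.2 < 2 := by
  intro p hp
  rw [YoungDiagram.mem_cells, mem_twoCol] at hp
  omega

lemma card_twoCol (c0 c1 : ℕ) : (twoCol c0 c1).card = c0 + min c1 c0 := by
  show (twoColCells c0 c1).card = _
  rw [twoColCells, Finset.card_union_of_disjoint, Finset.card_image_of_injective,
    Finset.card_image_of_injective, Finset.card_range, Finset.card_range]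
  · intro a b hab; simpa using hab
  · intro a b hab; simpa using hab
  · rw [Finset.disjoint_left]
    rintro ⟨i, j⟩ h1 h2
    simp only [Finset.mem_image, Finset.mem_range, Prod.mk.injEq] at h1 h2
    obtain ⟨k, _, _, rfl⟩ := h1
    obtain ⟨l, _, _, h⟩ := h2
    omega

lemma twoCol_le_twoCol {c0 c1 d0 d1 : ℕ} (h0 : c0 ≤ d0) (h1 : min c1 c0 ≤ min d1 d0) :
    twoCol c0 c1 ≤ twoCol d0 d1 := by
  intro p hp
  rw [mem_twoCol] at hp ⊢
  omega

lemma twoCol_zero : twoCol 0 0 = ⊥ := by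
  ext p
  rw [YoungDiagram.mem_cells, mem_twoCol]
  simp [YoungDiagram.cells_bot]

lemma cells_subset_of_le {μ ν : YoungDiagram} (h : μ ≤ ν) : μ.cells ⊆ ν.cells := h

lemma colLen_mono {μ ν : YoungDiagram} (h : μ ≤ ν) (j : ℕ) : μ.colLen j ≤ ν.colLen j := by
  by_contra h'
  push_neg at h'
  have h1 : (ν.colLen j, j) ∈ μ := YoungDiagram.mem_iff_lt_colLen.2 h'
  have h2 : (ν.colLen j, j) ∈ ν := by
    rw [← YoungDiagram.mem_cells]
    exact cells_subset_of_le h (YoungDiagram.mem_cells _ |>.2 h1)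
  rw [YoungDiagram.mem_iff_lt_colLen] at h2
  omega

lemma dominoAdd_col0 {c0 c1 : ℕ} (h : c1 ≤ c0) :
    IsDominoAdd (twoCol c0 c1) (twoCol (c0 + 2) c1) := by
  have hdiff : (twoCol (c0+2) c1).cells \ (twoCol c0 c1).cells = {(c0, 0), (c0+1, 0)} := by
    ext ⟨i, j⟩
    simp only [Finset.mem_sdiff, YoungDiagram.mem_cells, mem_twoCol, Finset.mem_insert,
      Finset.mem_singleton, Prod.mk.injEq]
    omega
  refine ⟨twoCol_le_twoCol (by omega) (by omega), ?_, ?_⟩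
  · rw [hdiff, Finset.card_insert_of_notMem (by simp), Finset.card_singleton]
  · rw [hdiff]
    rintro p hp q hq hne
    simp only [Finset.mem_insert, Finset.mem_singleton] at hp hq
    rcases hp with rfl | rfl <;> rcases hq with rfl | rfl <;> try exact absurd rfl hne
    · exact Or.inr ⟨rfl, Or.inl rfl⟩
    · exact Or.inr ⟨rfl, Or.inr rfl⟩

lemma dominoAdd_col1 {c0 c1 : ℕ} (h : c1 + 2 ≤ c0) :
    IsDominoAdd (twoCol c0 c1) (twoCol c0 (c1 + 2)) := by
  have hdiff : (twoCol c0 (c1+2)).cells \ (twoCol c0 c1).cells = {(c1, 1), (c1+1, 1)} := by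
    ext ⟨i, j⟩
    simp only [Finset.mem_sdiff, YoungDiagram.mem_cells, mem_twoCol, Finset.mem_insert,
      Finset.mem_singleton, Prod.mk.injEq]
    omega
  refine ⟨twoCol_le_twoCol (by omega) (by omega), ?_, ?_⟩
  · rw [hdiff, Finset.card_insert_of_notMem (by simp), Finset.card_singleton]
  · rw [hdiff]
    rintro p hp q hq hne
    simp only [Finset.mem_insert, Finset.mem_singleton] at hp hq
    rcases hp with rfl | rfl <;> rcases hq with rfl | rfl <;> try exact absurd rfl hne
    · exact Or.inr ⟨rfl, Or.inl rfl⟩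
    · exact Or.inr ⟨rfl, Or.inr rfl⟩

lemma dominoAdd_row {c : ℕ} :
    IsDominoAdd (twoCol c c) (twoCol (c + 1) (c + 1)) := by
  have hdiff : (twoCol (c+1) (c+1)).cells \ (twoCol c c).cells = {(c, 0), (c, 1)} := by
    ext ⟨i, j⟩
    simp only [Finset.mem_sdiff, YoungDiagram.mem_cells, mem_twoCol, Finset.mem_insert,
      Finset.mem_singleton, Prod.mk.injEq]
    omega
  refine ⟨twoCol_le_twoCol (by omega) (by omega), ?_, ?_⟩
  · rw [hdiff, Finset.card_insert_of_notMem (by simp), Finset.card_singleton]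
  · rw [hdiff]
    rintro p hp q hq hne
    simp only [Finset.mem_insert, Finset.mem_singleton] at hp hq
    rcases hp with rfl | rfl <;> rcases hq with rfl | rfl <;> try exact absurd rfl hne
    · exact Or.inl ⟨rfl, Or.inl rfl⟩
    · exact Or.inl ⟨rfl, Or.inr rfl⟩

lemma dominoAdd_cases {c0 c1 d0 d1 : ℕ} (hc : c1 ≤ c0) (hd : d1 ≤ d0)
    (h : IsDominoAdd (twoCol c0 c1) (twoCol d0 d1)) :
    (d0 = c0 + 2 ∧ d1 = c1) ∨ (d0 = c0 ∧ d1 = c1 + 2) ∨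
      (c0 = c1 ∧ d0 = c0 + 1 ∧ d1 = c1 + 1) := by
  obtain ⟨hle, hcard, hadj⟩ := h
  have hm0 : c0 ≤ d0 := by
    have := colLen_mono hle 0
    rwa [colLen_twoCol_zero, colLen_twoCol_zero] at this
  have hm1 : c1 ≤ d1 := by
    have := colLen_mono hle 1
    rw [colLen_twoCol_one, colLen_twoCol_one] at this
    omega
  have hsub := cells_subset_of_le hle
  rw [Finset.card_sdiff_of_subset hsub] at hcard
  have hclecard : (twoCol c0 c1).cells.card ≤ (twoCol d0 d1).cells.card :=
    Finset.card_le_card hsub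
  have hcc : (twoCol c0 c1).cells.card = c0 + min c1 c0 := card_twoCol c0 c1
  have hdd : (twoCol d0 d1).cells.card = d0 + min d1 d0 := card_twoCol d0 d1
  have hsum : d0 + d1 = c0 + c1 + 2 := by omega
  have hcases : (d0 = c0 + 2 ∧ d1 = c1) ∨ (d0 = c0 ∧ d1 = c1 + 2) ∨
      (d0 = c0 + 1 ∧ d1 = c1 + 1) := by omega
  rcases hcases with h' | h' | ⟨h0, h1⟩
  · exact Or.inl h'
  · exact Or.inr (Or.inl h')
  · -- middle case : the two added cells are (c0,0) and (c1,1)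
    have hp : (c0, 0) ∈ (twoCol d0 d1).cells \ (twoCol c0 c1).cells := by
      simp only [Finset.mem_sdiff, YoungDiagram.mem_cells, mem_twoCol,
        min_eq_left hd, min_eq_left hc, true_and, false_and, or_false, false_or]
      omega
    have hq : (c1, 1) ∈ (twoCol d0 d1).cells \ (twoCol c0 c1).cells := by
      simp only [Finset.mem_sdiff, YoungDiagram.mem_cells, mem_twoCol,
        min_eq_left hd, min_eq_left hc, true_and, false_and, or_false, false_or]
      omega
    have hadj' := hadj _ hp _ hq (by simp)
    rcases hadj' with ⟨he, _⟩ | ⟨he, _⟩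
    · simp only at he
      exact Or.inr (Or.inr ⟨he, by omega, by omega⟩)
    · simp at he

lemma colLen_bot (j : ℕ) : (⊥ : YoungDiagram).colLen j = 0 := by
  by_contra h
  exact YoungDiagram.notMem_bot (0, j) (YoungDiagram.mem_iff_lt_colLen.2 (by omega))

lemma osc_step {n : ℕ} {T : Fin (2*n + 1) → YoungDiagram} (hT : IsOscDominoTwoCol n T)
    (i : Fin (2*n)) :
    ((T i.succ).colLen 0 = (T i.castSucc).colLen 0 + 2 ∧
        (T i.succ).colLen 1 = (T i.castSucc).colLen 1) ∨
    ((T i.succ).colLen 0 = (T i.castSucc).colLen 0 ∧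
        (T i.succ).colLen 1 = (T i.castSucc).colLen 1 + 2) ∨
    ((T i.castSucc).colLen 0 = (T i.castSucc).colLen 1 ∧
        (T i.succ).colLen 0 = (T i.castSucc).colLen 0 + 1 ∧
        (T i.succ).colLen 1 = (T i.castSucc).colLen 1 + 1) ∨
    ((T i.castSucc).colLen 0 = (T i.succ).colLen 0 + 2 ∧
        (T i.castSucc).colLen 1 = (T i.succ).colLen 1) ∨
    ((T i.castSucc).colLen 0 = (T i.succ).colLen 0 ∧
        (T i.castSucc).colLen 1 = (T i.succ).colLen 1 + 2) ∨
    ((T i.succ).colLen 0 = (T i.succ).colLen 1 ∧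
        (T i.castSucc).colLen 0 = (T i.succ).colLen 0 + 1 ∧
        (T i.castSucc).colLen 1 = (T i.succ).colLen 1 + 1) := by
  obtain ⟨-, -, hstep, hcols⟩ := hT
  have h2c : ∀ j, T j = twoCol ((T j).colLen 0) ((T j).colLen 1) := fun j => eq_twoCol (hcols j)
  have hanti : ∀ j, (T j).colLen 1 ≤ (T j).colLen 0 := fun j => (T j).colLen_anti 0 1 (by omega)
  rcases hstep i with h | h
  · rw [h2c i.castSucc, h2c i.succ] at h
    have := dominoAdd_cases (hanti i.castSucc) (hanti i.succ) h
    rcases this with h' | h' | h'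
    · exact Or.inl h'
    · exact Or.inr (Or.inl h')
    · exact Or.inr (Or.inr (Or.inl h'))
  · rw [h2c i.succ, h2c i.castSucc] at h
    have := dominoAdd_cases (hanti i.succ) (hanti i.castSucc) h
    rcases this with h' | h' | h'
    · exact Or.inr (Or.inr (Or.inr (Or.inl h')))
    · exact Or.inr (Or.inr (Or.inr (Or.inr (Or.inl h'))))
    · exact Or.inr (Or.inr (Or.inr (Or.inr (Or.inr h'))))

lemma osc_even {n : ℕ} {T : Fin (2*n + 1) → YoungDiagram} (hT : IsOscDominoTwoCol n T) :
    ∀ i, ((T i).colLen 0 + (T i).colLen 1) % 2 = 0 := by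
  intro i
  induction i using Fin.induction with
  | zero => rw [hT.1]; simp [colLen_bot]
  | succ i ih =>
    have := osc_step hT i
    omega

lemma osc_to_packing {n : ℕ} {T : Fin (2*n + 1) → YoungDiagram} (hT : IsOscDominoTwoCol n T) :
    IsDyckPacking n (fun i => (((T i).colLen 0 + (T i).colLen 1)) / 2)
      (fun i => (((T i).colLen 0 - (T i).colLen 1)) / 2) := by
  have hanti : ∀ j, (T j).colLen 1 ≤ (T j).colLen 0 := fun j => (T j).colLen_anti 0 1 (by omega)
  have he := osc_even hT
  refine ⟨⟨?_, ?_, ?_⟩, ⟨?_, ?_, ?_⟩, ?_⟩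
  · simp [hT.1, colLen_bot]
  · simp [hT.2.1, colLen_bot]
  · intro i
    have := osc_step hT i
    have := he i.castSucc
    have := he i.succ
    have := hanti i.castSucc
    have := hanti i.succ
    simp only
    omega
  · simp [hT.1, colLen_bot]
  · simp [hT.2.1, colLen_bot]
  · intro i
    have := osc_step hT i
    have := he i.castSucc
    have := he i.succ
    have := hanti i.castSucc
    have := hanti i.succ
    simp only
    omega
  · intro i
    have := hanti i
    simp only
    omega

lemma packing_to_osc {n : ℕ} {D E : Fin (2*n + 1) → ℕ} (h : IsDyckPacking n D E) :
    IsOscDominoTwoCol n (fun i => twoCol (D i + E i) (D i - E i)) := by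
  obtain ⟨⟨hD0, hDl, hDs⟩, ⟨hE0, hEl, hEs⟩, hle⟩ := h
  refine ⟨?_, ?_, ?_, ?_⟩
  · simp only [hD0, hE0]
    exact twoCol_zero
  · simp only [hDl, hEl]
    exact twoCol_zero
  · intro i
    have hD := hDs i
    have hE := hEs i
    have hl1 := hle i.castSucc
    have hl2 := hle i.succ
    simp only
    rcases hD with hD | hD <;>
      rcases hE with hE | hE | ⟨hE, hE0'⟩
    · -- D up, E up : add vertical domino in column 0
      left
      have e1 : D i.succ + E i.succ = (D i.castSucc + E i.castSucc) + 2 := by omega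
      have e2 : D i.succ - E i.succ = D i.castSucc - E i.castSucc := by omega
      rw [e1, e2]
      exact dominoAdd_col0 (by omega)
    · -- D up, E down : add vertical domino in column 1
      left
      have e1 : D i.succ + E i.succ = D i.castSucc + E i.castSucc := by omega
      have e2 : D i.succ - E i.succ = (D i.castSucc - E i.castSucc) + 2 := by omega
      rw [e1, e2]
      exact dominoAdd_col1 (by omega)
    · -- D up, E flat at 0 : add horizontal domino
      left
      have e0 : E i.castSucc = 0 := hE0'
      have e1 : D i.succ + E i.succ = (D i.castSucc) + 1 := by omega
      have e2 : D i.succ - E i.succ = (D i.castSucc) + 1 := by omega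
      have e3 : D i.castSucc + E i.castSucc = D i.castSucc := by omega
      have e4 : D i.castSucc - E i.castSucc = D i.castSucc := by omega
      rw [e1, e2, e3, e4]
      exact dominoAdd_row
    · -- D down, E up : remove vertical domino in column 1
      right
      have e1 : D i.castSucc + E i.castSucc = D i.succ + E i.succ := by omega
      have e2 : D i.castSucc - E i.castSucc = (D i.succ - E i.succ) + 2 := by omega
      rw [e1, e2]
      exact dominoAdd_col1 (by omega)
    · -- D down, E down : remove vertical domino in column 0
      right
      have e1 : D i.castSucc + E i.castSucc = (D i.succ + E i.succ) + 2 := by omega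
      have e2 : D i.castSucc - E i.castSucc = D i.succ - E i.succ := by omega
      rw [e1, e2]
      exact dominoAdd_col0 (by omega)
    · -- D down, E flat at 0 : remove horizontal domino
      right
      have e1 : D i.castSucc + E i.castSucc = (D i.succ) + 1 := by omega
      have e2 : D i.castSucc - E i.castSucc = (D i.succ) + 1 := by omega
      have e3 : D i.succ + E i.succ = D i.succ := by omega
      have e4 : D i.succ - E i.succ = D i.succ := by omega
      rw [e1, e2, e3, e4]
      exact dominoAdd_row
  · intro i
    exact twoCol_cols

/-- Oscillating domino tableaux of length `2n` with at most two columns are in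
bijection with Dyck path packings of length `2n`. -/
theorem stmt7 (n : ℕ) :
    Nonempty ({T : Fin (2*n + 1) → YoungDiagram // IsOscDominoTwoCol n T} ≃
      {p : (Fin (2*n + 1) → ℕ) × (Fin (2*n + 1) → ℕ) // IsDyckPacking n p.1 p.2}) := by
  constructor
  exact
    { toFun := fun T => ⟨(fun i => (((T.1 i).colLen 0 + (T.1 i).colLen 1)) / 2,
        fun i => (((T.1 i).colLen 0 - (T.1 i).colLen 1)) / 2), osc_to_packing T.2⟩
      invFun := fun p => ⟨fun i => twoCol (p.1.1 i + p.1.2 i) (p.1.1 i - p.1.2 i),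
        packing_to_osc p.2⟩
      left_inv := by
        rintro ⟨T, hT⟩
        apply Subtype.ext
        funext i
        have he := osc_even hT i
        have hanti : (T i).colLen 1 ≤ (T i).colLen 0 := (T i).colLen_anti 0 1 (by omega)
        simp only
        have e1 : ((T i).colLen 0 + (T i).colLen 1) / 2 +
            ((T i).colLen 0 - (T i).colLen 1) / 2 = (T i).colLen 0 := by omega
        have e2 : ((T i).colLen 0 + (T i).colLen 1) / 2 -
            ((T i).colLen 0 - (T i).colLen 1) / 2 = (T i).colLen 1 := by omega
        rw [e1, e2]
        exact (eq_twoCol (hT.2.2.2 i)).symm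
      right_inv := by
        rintro ⟨⟨D, E⟩, hp⟩
        apply Subtype.ext
        have hle : ∀ i, E i ≤ D i := hp.2.2
        simp only [Prod.mk.injEq]
        constructor <;> funext i <;>
          rw [colLen_twoCol_zero, colLen_twoCol_one] <;>
          · have := hle i
            omega }
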